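/- In the bosonized algebra with relations gx = xg, gy = yg + xg, yx = xy − (1/2)x², for all n, ℓ ≥ 0 one has g^n y^ℓ = ∑_{k=0}^{ℓ} binom(ℓ,k) (−1)^k ([−2n]^{[k]} / 2^k) x^k y^{ℓ−k} g^n. -/

import Mathlib

/-- The raising factorial `[t]^{[k]} = t(t+1)⋯(t+k-1)`. -/
noncomputable def raise {K : Type*} [Field K] (t : K) (k : ℕ) : K :=
  ∏ i ∈ Finset.range k, (t + i)

/-- The falling factorial `t(t-1)⋯(t-k+1)`. -/
noncomputable def fall {K : Type*} [Field K] (t : K) (k : ℕ) : K :=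
  ∏ i ∈ Finset.range k, (t - i)

/-- Coefficients appearing when commuting `y^m` past `x`. -/
noncomputable def Ecoef (K : Type*) [Field K] (m i : ℕ) : K :=
  (-1/2:K)^i * (m.descFactorial i : K)

section ScalarLemmas
variable {K : Type*} [Field K]

lemma fall_zero (t : K) : fall t 0 = 1 := by simp [fall]

lemma fall_succ (t : K) (k : ℕ) : fall t (k+1) = fall t k * (t - k) := by
  simp [fall, Finset.prod_range_succ]

lemma fall_succ_left (t : K) (k : ℕ) : fall t (k+1) = t * fall (t-1) k := by
  rw [fall, Finset.prod_range_succ']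
  simp only [fall]
  rw [mul_comm]
  congr 1
  · simp
  · exact Finset.prod_congr rfl (fun i _ => by push_cast; ring)

lemma raise_neg_eq (t : K) (k : ℕ) : raise (-t) k = (-1)^k * fall t k := by
  rw [raise, fall]
  rw [show ((-1:K)^k) = ∏ _i ∈ Finset.range k, (-1:K) by simp, ← Finset.prod_mul_distrib]
  exact Finset.prod_congr rfl (fun i _ => by ring)

lemma sumS (t : K) (m : ℕ) :
    ∑ k ∈ Finset.range (m+1), ((-1:K)^(m-k) * (m.descFactorial (m-k) : K) * fall t k)
      = fall (t-1) m := by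
  induction m with
  | zero => simp [fall_zero]
  | succ m ih =>
    rw [Finset.sum_range_succ]
    have h1 : ∀ k ∈ Finset.range (m+1),
        ((-1:K)^(m+1-k) * ((m+1).descFactorial (m+1-k) : K) * fall t k)
        = (-(m+1) : K) * ((-1:K)^(m-k) * (m.descFactorial (m-k) : K) * fall t k) := by
      intro k hk
      have hkm : k ≤ m := Nat.lt_succ_iff.mp (Finset.mem_range.mp hk)
      have h2 : m + 1 - k = (m - k) + 1 := by omega
      rw [h2, Nat.succ_descFactorial_succ]
      push_cast
      ring
    rw [Finset.sum_congr rfl h1, ← Finset.mul_sum, ih]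
    simp only [Nat.sub_self, pow_zero, Nat.descFactorial_zero, Nat.cast_one, one_mul]
    rw [fall_succ_left, fall_succ]
    ring

lemma natid {k m ℓ : ℕ} (hk : k ≤ m) (hm : m ≤ ℓ) :
    ℓ.choose k * (ℓ-k).descFactorial (m-k) = ℓ.choose m * m.descFactorial (m-k) := by
  rw [Nat.descFactorial_eq_factorial_mul_choose, Nat.descFactorial_eq_factorial_mul_choose,
    Nat.choose_symm hk]
  calc ℓ.choose k * (Nat.factorial (m-k) * (ℓ-k).choose (m-k))
      = (ℓ.choose k * (ℓ-k).choose (m-k)) * Nat.factorial (m-k) := by ring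
    _ = (ℓ.choose m * m.choose k) * Nat.factorial (m-k) := by rw [← Nat.choose_mul hk]
    _ = ℓ.choose m * (Nat.factorial (m-k) * m.choose k) := by ring

lemma coeff_main (h2 : (2:K) ≠ 0) (n ℓ m : ℕ) (hm : m ≤ ℓ) :
    (((ℓ+1).choose (m+1) : K)) * fall (2*(n:K)) (m+1) / 2^(m+1)
      = ((ℓ.choose (m+1) : K)) * fall (2*(n:K)) (m+1) / 2^(m+1)
        + ∑ k ∈ Finset.range (m+1),
            (ℓ.choose k : K) * fall (2*(n:K)) k / 2^k * (n:K) * Ecoef K (ℓ-k) (m-k) := by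
  have hterm : ∀ k ∈ Finset.range (m+1),
      (ℓ.choose k : K) * fall (2*(n:K)) k / 2^k * (n:K) * Ecoef K (ℓ-k) (m-k)
      = ((ℓ.choose m : K) * ((n:K)/2^m))
          * ((-1:K)^(m-k) * (m.descFactorial (m-k) : K) * fall (2*(n:K)) k) := by
    intro k hk
    have hkm : k ≤ m := Nat.lt_succ_iff.mp (Finset.mem_range.mp hk)
    have key : ((ℓ.choose k : K)) * ((ℓ-k).descFactorial (m-k) : K)
        = (ℓ.choose m : K) * (m.descFactorial (m-k) : K) := by
      exact_mod_cast congrArg (Nat.cast : ℕ → K) (natid hkm hm)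
    have hpow : (2:K)^m = 2^k * 2^(m-k) := by
      rw [← pow_add]; congr 1; omega
    simp only [Ecoef]
    rw [show ((-1:K)/2)^(m-k) = (-1:K)^(m-k) / 2^(m-k) from div_pow _ _ _, hpow]
    have h2k : (2:K)^k ≠ 0 := pow_ne_zero _ h2
    have h2mk : (2:K)^(m-k) ≠ 0 := pow_ne_zero _ h2
    field_simp
    linear_combination ((n:K) * fall (2*(n:K)) k) * key
  rw [Finset.sum_congr rfl hterm, ← Finset.mul_sum, sumS]
  rw [Nat.choose_succ_succ, fall_succ_left]
  have h2m : (2:K)^m ≠ 0 := pow_ne_zero _ h2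
  push_cast
  field_simp
  ring

end ScalarLemmas

section Alg
variable {K : Type*} [Field K] {A : Type*} [Ring A] [Algebra K A] {x y g : A}

lemma Lyx (hrel : y * x = x * y - (1/2 : K) • x ^ 2) (j : ℕ) :
    y * x^j = x^j * y - (((j:K))/2) • x^(j+1) := by
  induction j with
  | zero => simp
  | succ j ih =>
    have h0 : y * x^(j+1) = (y * x^j) * x := by rw [mul_assoc, ← pow_succ]
    rw [h0, ih, sub_mul, smul_mul_assoc, ← pow_succ, mul_assoc, hrel]
    rw [mul_sub, mul_smul_comm, ← mul_assoc, ← pow_succ, ← pow_add]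
    have h1 : j + 2 = j + 1 + 1 := rfl
    rw [h1]
    push_cast
    rw [sub_sub, ← add_smul]
    congr 2
    ring

lemma Lymx (hrel : y * x = x * y - (1/2 : K) • x ^ 2) (m : ℕ) :
    y^m * x = ∑ i ∈ Finset.range (m+1), Ecoef K m i • (x^(i+1) * y^(m-i)) := by
  induction m with
  | zero => simp [Ecoef]
  | succ m ih =>
    have h0 : y^(m+1) * x = y * (y^m * x) := by rw [pow_succ', mul_assoc]
    rw [h0, ih, Finset.mul_sum]
    have h1 : ∀ i ∈ Finset.range (m+1),
        y * (Ecoef K m i • (x^(i+1) * y^(m-i)))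
        = Ecoef K m i • (x^(i+1) * y^(m+1-i))
          - (Ecoef K m i * ((i+1:K)/2)) • (x^(i+2) * y^(m-i)) := by
      intro i hi
      have him : i ≤ m := Nat.lt_succ_iff.mp (Finset.mem_range.mp hi)
      rw [mul_smul_comm, ← mul_assoc, Lyx hrel (i+1), sub_mul, smul_sub, smul_mul_assoc,
        smul_smul, mul_assoc, ← pow_succ']
      have h2 : m - i + 1 = m + 1 - i := by omega
      have h3 : i + 1 + 1 = i + 2 := rfl
      rw [h2, h3]
      push_cast
      ring_nf
    rw [Finset.sum_congr rfl h1, Finset.sum_sub_distrib]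
    have hz : Ecoef K m (m+1) = 0 := by
      simp [Ecoef, Nat.descFactorial_eq_zero_iff_lt.mpr (Nat.lt_succ_self m)]
    have hext : ∑ i ∈ Finset.range (m+1), Ecoef K m i • (x^(i+1) * y^(m+1-i))
        = ∑ i ∈ Finset.range (m+2), Ecoef K m i • (x^(i+1) * y^(m+1-i)) := by
      rw [Finset.sum_range_succ (fun i => Ecoef K m i • (x^(i+1) * y^(m+1-i))) (m+1), hz,
        zero_smul, add_zero]
    rw [hext]
    have hkey : ∑ i ∈ Finset.range (m+2),
          (Ecoef K m i - Ecoef K (m+1) i) • (x^(i+1) * y^(m+1-i))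
        = ∑ i ∈ Finset.range (m+1), (Ecoef K m i * ((i+1:K)/2)) • (x^(i+2) * y^(m-i)) := by
      rw [Finset.sum_range_succ'
        (fun i => (Ecoef K m i - Ecoef K (m+1) i) • (x^(i+1) * y^(m+1-i))) (m+1)]
      have h00 : Ecoef K m 0 - Ecoef K (m+1) 0 = 0 := by simp [Ecoef]
      rw [h00, zero_smul, add_zero]
      apply Finset.sum_congr rfl
      intro i hi
      have him : i ≤ m := Nat.lt_succ_iff.mp (Finset.mem_range.mp hi)
      have h2 : m + 1 - (i+1) = m - i := by omega
      have h3 : i + 1 + 1 = i + 2 := rfl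
      rw [h2, h3]
      congr 1
      simp only [Ecoef, Nat.succ_descFactorial_succ, Nat.descFactorial_succ]
      push_cast [him]
      ring
    symm
    calc ∑ i ∈ Finset.range (m+2), Ecoef K (m+1) i • (x^(i+1) * y^(m+1-i))
        = ∑ i ∈ Finset.range (m+2), (Ecoef K m i • (x^(i+1) * y^(m+1-i))
            - (Ecoef K m i - Ecoef K (m+1) i) • (x^(i+1) * y^(m+1-i))) := by
          apply Finset.sum_congr rfl
          intro i _
          rw [← sub_smul]
          congr 1
          ring
      _ = ∑ i ∈ Finset.range (m+2), Ecoef K m i • (x^(i+1) * y^(m+1-i))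
            - ∑ i ∈ Finset.range (m+1), (Ecoef K m i * ((i+1:K)/2)) • (x^(i+2) * y^(m-i)) := by
          rw [Finset.sum_sub_distrib, hkey]

lemma Lgny (hgx : g * x = x * g) (hgy : g * y = y * g + x * g) (n : ℕ) :
    g^n * y = y * g^n + (n:K) • (x * g^n) := by
  induction n with
  | zero => simp
  | succ n ih =>
    have hc : Commute g x := hgx
    have h0 : g^(n+1) * y = g^n * (g * y) := by rw [pow_succ, mul_assoc]
    rw [h0, hgy, mul_add, ← mul_assoc, ← mul_assoc, ih, (hc.pow_left n).eq]
    rw [add_mul, smul_mul_assoc, mul_assoc, mul_assoc, ← pow_succ]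
    push_cast
    rw [add_smul, one_smul]
    abel

end Alg

/-- In any algebra (over a field of characteristic `≠ 2`) with elements `x, y, g`
satisfying `gx = xg`, `gy = yg + xg`, `yx = xy - (1/2)x²`, for all `n, ℓ ≥ 0` one has
`g^n y^ℓ = ∑_{k=0}^{ℓ} C(ℓ,k) (-1)^k ([-2n]^{[k]}/2^k) x^k y^{ℓ-k} g^n`. -/
theorem stmt3 (K : Type*) [Field K] (h2 : (2 : K) ≠ 0)
    (A : Type*) [Ring A] [Algebra K A] (x y g : A)
    (hgx : g * x = x * g) (hgy : g * y = y * g + x * g)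
    (hrel : y * x = x * y - (1/2 : K) • x ^ 2) (n ℓ : ℕ) :
    g ^ n * y ^ ℓ = ∑ k ∈ Finset.range (ℓ + 1),
      ((ℓ.choose k : K) * (-1) ^ k * raise (-2 * (n : K)) k / 2 ^ k) •
        (x ^ k * y ^ (ℓ - k) * g ^ n) := by
  have hC : ∀ (l k : ℕ), ((l.choose k : K) * (-1)^k * raise (-2*(n:K)) k / 2^k)
      = ((l.choose k : K) * fall (2*(n:K)) k / 2^k) := by
    intro l k
    rw [show (-2*(n:K)) = -(2*(n:K)) by ring, raise_neg_eq]
    have h : (-1:K)^k * (-1:K)^k = 1 := by rw [← mul_pow]; norm_num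
    linear_combination ((l.choose k : K) * fall (2*(n:K)) k / 2^k) * h
  simp only [hC]
  induction ℓ with
  | zero => simp [fall_zero]
  | succ ℓ ih =>
    have h0 : g^n * y^(ℓ+1) = (g^n * y^ℓ) * y := by rw [pow_succ, ← mul_assoc]
    rw [h0, ih, Finset.sum_mul]
    have e2 : ∀ k ∈ Finset.range (ℓ+1),
        (((ℓ.choose k : K) * fall (2*(n:K)) k / 2^k) • (x^k * y^(ℓ-k) * g^n)) * y
        = ((ℓ.choose k : K) * fall (2*(n:K)) k / 2^k) • (x^k * y^(ℓ+1-k) * g^n)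
          + ∑ i ∈ Finset.range (ℓ+1-k),
              ((ℓ.choose k : K) * fall (2*(n:K)) k / 2^k * (n:K) * Ecoef K (ℓ-k) i)
                • (x^k * (x^(i+1) * y^(ℓ-k-i)) * g^n) := by
      intro k hk
      have hkℓ : k ≤ ℓ := Nat.lt_succ_iff.mp (Finset.mem_range.mp hk)
      have h1 : ℓ - k + 1 = ℓ + 1 - k := by omega
      rw [smul_mul_assoc, mul_assoc (x^k * y^(ℓ-k)) (g^n) y, Lgny (K:=K) hgx hgy n, mul_add,
        mul_smul_comm]
      rw [← mul_assoc (x^k * y^(ℓ-k)) y (g^n), mul_assoc (x^k) (y^(ℓ-k)) y, ← pow_succ]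
      rw [← mul_assoc (x^k * y^(ℓ-k)) x (g^n), mul_assoc (x^k) (y^(ℓ-k)) x,
        Lymx hrel (ℓ-k), h1]
      rw [Finset.mul_sum, Finset.sum_mul]
      have e21 : ∀ i ∈ Finset.range (ℓ+1-k),
          x^k * (Ecoef K (ℓ-k) i • (x^(i+1) * y^(ℓ-k-i))) * g^n
          = Ecoef K (ℓ-k) i • (x^k * (x^(i+1) * y^(ℓ-k-i)) * g^n) := by
        intro i _
        rw [mul_smul_comm, smul_mul_assoc]
      rw [Finset.sum_congr rfl e21, smul_add]
      congr 1
      rw [smul_smul, Finset.smul_sum]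
      exact Finset.sum_congr rfl (fun i _ => smul_smul _ _ _)
    rw [Finset.sum_congr rfl e2, Finset.sum_add_distrib]
    have e3 : (∑ k ∈ Finset.range (ℓ+1), ∑ i ∈ Finset.range (ℓ+1-k),
          ((ℓ.choose k : K) * fall (2*(n:K)) k / 2^k * (n:K) * Ecoef K (ℓ-k) i)
            • (x^k * (x^(i+1) * y^(ℓ-k-i)) * g^n))
        = ∑ m ∈ Finset.range (ℓ+1), ∑ k ∈ Finset.range (m+1),
            ((ℓ.choose k : K) * fall (2*(n:K)) k / 2^k * (n:K) * Ecoef K (ℓ-k) (m-k))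
              • (x^k * (x^(m-k+1) * y^(ℓ-k-(m-k))) * g^n) :=
      (Finset.sum_range_diag_flip (ℓ+1) _).symm
    rw [e3]
    have e4 : ∀ m ∈ Finset.range (ℓ+1),
        (∑ k ∈ Finset.range (m+1),
            ((ℓ.choose k : K) * fall (2*(n:K)) k / 2^k * (n:K) * Ecoef K (ℓ-k) (m-k))
              • (x^k * (x^(m-k+1) * y^(ℓ-k-(m-k))) * g^n))
        = (∑ k ∈ Finset.range (m+1),
            (ℓ.choose k : K) * fall (2*(n:K)) k / 2^k * (n:K) * Ecoef K (ℓ-k) (m-k))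
              • (x^(m+1) * y^(ℓ-m) * g^n) := by
      intro m hm
      have hmℓ : m ≤ ℓ := Nat.lt_succ_iff.mp (Finset.mem_range.mp hm)
      rw [Finset.sum_smul]
      apply Finset.sum_congr rfl
      intro k hk
      have hkm : k ≤ m := Nat.lt_succ_iff.mp (Finset.mem_range.mp hk)
      rw [show ℓ-k-(m-k) = ℓ-m by omega, ← mul_assoc (x^k) (x^(m-k+1)) (y^(ℓ-m)),
        ← pow_add, show k+(m-k+1) = m+1 by omega]
    rw [Finset.sum_congr rfl e4]
    have e5 : ∑ k ∈ Finset.range (ℓ+1),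
          ((ℓ.choose k : K) * fall (2*(n:K)) k / 2^k) • (x^k * y^(ℓ+1-k) * g^n)
        = ∑ k ∈ Finset.range (ℓ+2),
          ((ℓ.choose k : K) * fall (2*(n:K)) k / 2^k) • (x^k * y^(ℓ+1-k) * g^n) := by
      rw [Finset.sum_range_succ
        (fun k => ((ℓ.choose k : K) * fall (2*(n:K)) k / 2^k) • (x^k * y^(ℓ+1-k) * g^n)) (ℓ+1)]
      rw [Nat.choose_eq_zero_of_lt (Nat.lt_succ_self ℓ)]
      simp
    rw [e5, Finset.sum_range_succ'
      (fun k => ((ℓ.choose k : K) * fall (2*(n:K)) k / 2^k) • (x^k * y^(ℓ+1-k) * g^n)) (ℓ+1),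
      Finset.sum_range_succ'
      (fun k => (((ℓ+1).choose k : K) * fall (2*(n:K)) k / 2^k) • (x^k * y^(ℓ+1-k) * g^n)) (ℓ+1)]
    rw [add_right_comm, ← Finset.sum_add_distrib]
    congr 1
    · apply Finset.sum_congr rfl
      intro m hm
      have hmℓ : m ≤ ℓ := Nat.lt_succ_iff.mp (Finset.mem_range.mp hm)
      rw [show ℓ+1-(m+1) = ℓ-m by omega, ← add_smul, ← coeff_main h2 n ℓ m hmℓ]
    · norm_num
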